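/- arXiv:2301.11340 — 3 statements merged into one kernel-verified Lean document; each statement's English description precedes it below -/
import Mathlib

section
/- Let E : S(S⊗R) → S(S'⊗R') be a CPTP map on finite-dimensional systems, with Choi state C(E) = (I ⊗ E)|Φ⟩⟨Φ| on systems S̄R̄S'R', where |Φ⟩ is the normalised maximally entangled state on (S̄R̄, SR). Then S does not signal to R' in E (i.e., tr_{S'}∘E = tr_{S'}∘E∘(M⊗I_R) for all CPTP maps M on S) if and only if tr_{S'}[C(E)] = (𝟙_{S̄}/d_{S̄}) ⊗ tr_{S̄S'}[C(E)]. -/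
open Matrix BigOperators ComplexOrder

/-- The (unnormalised) Choi matrix of a map between matrix spaces. -/
noncomputable def choiOf {A B : Type*} [Fintype A] [DecidableEq A]
    (E : Matrix A A ℂ → Matrix B B ℂ) : Matrix (A × B) (A × B) ℂ :=
  Matrix.of fun p q => E (Matrix.single p.1 q.1 1) p.2 q.2

/-- A map is CPTP if it is linear, completely positive (positive semidefinite Choi
matrix, by Choi's theorem) and trace preserving. -/
def IsCPTP {A B : Type*} [Fintype A] [Fintype B] [DecidableEq A]
    (E : Matrix A A ℂ → Matrix B B ℂ) : Prop :=
  (∀ (c : ℂ) (ρ σ : Matrix A A ℂ), E (c • ρ + σ) = c • E ρ + E σ) ∧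
  (choiOf E).PosSemidef ∧
  (∀ ρ, (E ρ).trace = ρ.trace)

/-- Partial trace over the first tensor factor. -/
noncomputable def trFst {A X : Type*} [Fintype A]
    (ρ : Matrix (A × X) (A × X) ℂ) : Matrix X X ℂ :=
  Matrix.of fun x x' => ∑ a, ρ (a, x) (a, x')

/-- Partial trace over the second tensor factor. -/
noncomputable def trSnd {X A : Type*} [Fintype A]
    (ρ : Matrix (X × A) (X × A) ℂ) : Matrix X X ℂ :=
  Matrix.of fun x x' => ∑ a, ρ (x, a) (x', a)

/-- The extension `M ⊗ I` of a (linear) map `M` acting on the first tensor factor. -/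
noncomputable def lext {A B X : Type*} [Fintype A] [DecidableEq A]
    (M : Matrix A A ℂ → Matrix B B ℂ) (ρ : Matrix (A × X) (A × X) ℂ) :
    Matrix (B × X) (B × X) ℂ :=
  Matrix.of fun p q => ∑ a, ∑ a',
    M (Matrix.single a a' 1) p.1 q.1 * ρ (a, p.2) (a', q.2)

/-- The normalised Choi state `C(E) = (I ⊗ E)|Φ⟩⟨Φ|` of a map `E`, where `|Φ⟩` is the
normalised maximally entangled state.  It is indexed by `(S̄R̄) × (S'R')`. -/
noncomputable def choiState {A B : Type*} [Fintype A] [DecidableEq A]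
    (E : Matrix A A ℂ → Matrix B B ℂ) : Matrix (A × B) (A × B) ℂ :=
  ((Fintype.card A : ℂ))⁻¹ • choiOf E

/-! ### Auxiliary lemmas -/

/-- Package the linearity condition of a CPTP map into a linear map. -/
noncomputable def NS.linOf {A B : Type*} [Fintype A] [Fintype B]
    (E : Matrix A A ℂ → Matrix B B ℂ)
    (h : ∀ (c : ℂ) (ρ σ : Matrix A A ℂ), E (c • ρ + σ) = c • E ρ + E σ) :
    Matrix A A ℂ →ₗ[ℂ] Matrix B B ℂ where
  toFun := E
  map_add' ρ σ := by have := h 1 ρ σ; simpa using this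
  map_smul' c ρ := by
    have h0 : E 0 = 0 := by
      have := h 1 0 0
      simp only [one_smul, add_zero] at this
      have h2 : E 0 + 0 = E 0 + E 0 := by simpa using this
      exact (add_left_cancel h2).symm
    have := h c ρ 0
    simpa [h0] using this

theorem NS.trace_std {A : Type*} [Fintype A] [DecidableEq A] (a a' : A) :
    (Matrix.single a a' (1 : ℂ)).trace = if a = a' then 1 else 0 := by
  classical
  by_cases h : a = a'
  · subst h
    simp [Matrix.trace, Matrix.diag, Matrix.single]
  · simp only [h, if_false, Matrix.trace, Matrix.diag]
    refine Finset.sum_eq_zero fun i _ => ?_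
    apply Matrix.single_apply_of_ne
    rintro ⟨rfl, rfl⟩
    exact h rfl

/-- Expansion of `trFst (E ρ)` entrywise over the standard basis. -/
theorem NS.expand_entry {A C X : Type*} [Fintype A] [DecidableEq A] [Fintype C] [Fintype X]
    (E : Matrix A A ℂ → Matrix (C × X) (C × X) ℂ)
    (h : ∀ (c : ℂ) (ρ σ : Matrix A A ℂ), E (c • ρ + σ) = c • E ρ + E σ)
    (ρ : Matrix A A ℂ) (x x' : X) :
    trFst (E ρ) x x' =
      ∑ p : A, ∑ q : A, ρ p q * trFst (E (Matrix.single p q 1)) x x' := by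
  have hρ : ρ = ∑ p : A, ∑ q : A, ρ p q • Matrix.single p q (1 : ℂ) := by
    conv_lhs => rw [Matrix.matrix_eq_sum_single ρ]
    simp [Matrix.smul_single]
  have hE : E ρ = ∑ p : A, ∑ q : A, ρ p q • E (Matrix.single p q 1) := by
    conv_lhs => rw [hρ]
    rw [show E = (NS.linOf E h : Matrix A A ℂ →ₗ[ℂ] _) from rfl]
    rw [map_sum]
    refine Finset.sum_congr rfl fun p _ => ?_
    rw [map_sum]
    refine Finset.sum_congr rfl fun q _ => ?_
    rw [_root_.map_smul]
  rw [hE]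
  simp only [trFst, Matrix.of_apply, Matrix.sum_apply, Matrix.smul_apply, smul_eq_mul,
    Finset.mul_sum]
  rw [Finset.sum_comm]
  refine Finset.sum_congr rfl fun p _ => ?_
  rw [Finset.sum_comm]

/-- For a CPTP map `E : S(S⊗R) → S(S'⊗R')` on finite-dimensional
systems, `S` does not signal to `R'` (i.e. `tr_{S'}∘E = tr_{S'}∘E∘(M⊗I_R)` for all CPTP
maps `M` on `S`) if and only if
`tr_{S'}[C(E)] = (𝟙_{S̄}/d_{S̄}) ⊗ tr_{S̄S'}[C(E)]`, stated entrywise: for all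
`s s₂ : S`, `r r₂ : R`, `r' r'₂ : R'`,
`(tr_{S'} C(E)) ((s,r),r') ((s₂,r₂),r'₂) = δ_{s s₂}/d_S · (tr_{S̄S'} C(E)) (r,r') (r₂,r'₂)`. -/
theorem nonsignalling_iff_choi
    {S R S' R' : Type} [Fintype S] [Fintype R] [Fintype S'] [Fintype R']
    [DecidableEq S] [DecidableEq R] [DecidableEq S'] [DecidableEq R']
    (E : Matrix (S × R) (S × R) ℂ → Matrix (S' × R') (S' × R') ℂ)
    (hE : IsCPTP E) :
    (∀ M : Matrix S S ℂ → Matrix S S ℂ, IsCPTP M →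
        ∀ ρ, trFst (E ρ) = trFst (E (lext M ρ))) ↔
    (∀ (s s₂ : S) (r r₂ : R) (r' r'₂ : R'),
      (∑ s' : S', choiState E ((s, r), (s', r')) ((s₂, r₂), (s', r'₂))) =
        (if s = s₂ then ((Fintype.card S : ℂ))⁻¹ else 0) *
          ∑ u : S, ∑ s' : S',
            choiState E ((u, r), (s', r')) ((u, r₂), (s', r'₂))) := by
  classical
  obtain ⟨hlin, _hpsd, _htr⟩ := hE
  set dS : ℂ := (Fintype.card S : ℂ) with hdS
  set c : ℂ := ((Fintype.card (S × R) : ℂ))⁻¹ with hc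
  have hcs : ∀ (s s₂ : S) (r r₂ : R) (r' r'₂ : R'),
      (∑ s' : S', choiState E ((s, r), (s', r')) ((s₂, r₂), (s', r'₂))) =
        c * trFst (E (Matrix.single (s, r) (s₂, r₂) 1)) r' r'₂ := by
    intro s s₂ r r₂ r' r'₂
    simp only [choiState, choiOf, Matrix.smul_apply, Matrix.of_apply, smul_eq_mul,
      trFst, Finset.mul_sum]
    rfl
  constructor
  · -- nonsignalling ⇒ Choi condition
    intro hns s s₂ r r₂ r' r'₂
    have hne : Nonempty S := ⟨s⟩
    have hd : dS ≠ 0 := by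
      simp [hdS, Fintype.card_ne_zero]
    set M₀ : Matrix S S ℂ → Matrix S S ℂ :=
      fun ρ => (ρ.trace * dS⁻¹) • (1 : Matrix S S ℂ) with hM₀def
    have hM₀ : IsCPTP M₀ := by
      refine ⟨?_, ?_, ?_⟩
      · intro a ρ σ
        ext i j
        simp only [hM₀def, Matrix.trace_add, Matrix.trace_smul, smul_eq_mul,
          Matrix.add_apply, Matrix.smul_apply, Matrix.one_apply, mul_ite, mul_one, mul_zero]
        split <;> ring
      · have hdiag : choiOf M₀ = Matrix.diagonal (fun _ : S × S => dS⁻¹) := by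
          ext ⟨a, b⟩ ⟨a', b'⟩
          simp only [choiOf, Matrix.of_apply, hM₀def, Matrix.smul_apply, Matrix.one_apply,
            NS.trace_std, Matrix.diagonal_apply, smul_eq_mul, Prod.mk.injEq, mul_ite,
            mul_one, mul_zero, ite_mul, zero_mul, one_mul]
          by_cases h1 : a = a' <;> by_cases h2 : b = b' <;> simp [h1, h2]
        rw [hdiag]
        refine Matrix.PosSemidef.diagonal fun _ => ?_
        show (0 : ℂ) ≤ dS⁻¹
        have h1 : dS⁻¹ = (((Fintype.card S : ℝ)⁻¹ : ℝ) : ℂ) := by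
          rw [hdS]; push_cast; ring
        rw [h1, Complex.zero_le_real]
        positivity
      · intro ρ
        simp only [hM₀def, Matrix.trace_smul, Matrix.trace_one, smul_eq_mul]
        field_simp [hdS]
        rfl
    have hlext : lext M₀ (Matrix.single (s, r) (s₂, r₂) (1 : ℂ)) =
        (if s = s₂ then dS⁻¹ else 0) •
          ∑ u : S, Matrix.single ((u, r) : S × R) (u, r₂) (1 : ℂ) := by
      ext ⟨p1, p2⟩ ⟨q1, q2⟩
      simp only [lext, Matrix.of_apply, hM₀def, Matrix.smul_apply, smul_eq_mul,
        NS.trace_std, Matrix.one_apply, Matrix.sum_apply]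
      rw [Finset.sum_eq_single s (fun a _ ha => Finset.sum_eq_zero fun a' _ => by
          rw [Matrix.single_apply_of_ne, mul_zero]
          rintro ⟨h1, -⟩
          exact ha (congrArg Prod.fst h1).symm) (by simp)]
      rw [Finset.sum_eq_single s₂ (fun a' _ ha' => by
          rw [Matrix.single_apply_of_ne, mul_zero]
          rintro ⟨-, h2⟩
          exact ha' (congrArg Prod.fst h2).symm) (by simp)]
      rw [Finset.sum_eq_single p1 (fun u _ hu => by
          apply Matrix.single_apply_of_ne
          rintro ⟨h1, -⟩
          exact hu (congrArg Prod.fst h1)) (by simp)]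
      by_cases h1 : s = s₂ <;> by_cases h2 : p1 = q1 <;>
        simp [h1, h2, Matrix.single, Prod.mk.injEq, and_assoc, and_comm, and_left_comm]
    have hmain : trFst (E (Matrix.single (s, r) (s₂, r₂) 1)) r' r'₂ =
        trFst (E (lext M₀ (Matrix.single (s, r) (s₂, r₂) 1))) r' r'₂ := by
      rw [hns M₀ hM₀ (Matrix.single (s, r) (s₂, r₂) 1)]
    have hrhs : trFst (E (lext M₀ (Matrix.single (s, r) (s₂, r₂) 1))) r' r'₂ =
        (if s = s₂ then dS⁻¹ else 0) *
          ∑ u : S, trFst (E (Matrix.single ((u, r) : S × R) (u, r₂) 1)) r' r'₂ := by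
      rw [hlext, show E = (NS.linOf E hlin : Matrix (S × R) (S × R) ℂ →ₗ[ℂ] _) from rfl,
        _root_.map_smul, map_sum]
      simp only [trFst, Matrix.of_apply, Matrix.smul_apply, Matrix.sum_apply, smul_eq_mul,
        Finset.mul_sum]
      rw [Finset.sum_comm]
    have h2 : (∑ u : S, ∑ s' : S', choiState E ((u, r), (s', r')) ((u, r₂), (s', r'₂))) =
        c * ∑ u : S, trFst (E (Matrix.single ((u, r) : S × R) (u, r₂) 1)) r' r'₂ := by
      rw [Finset.mul_sum]
      exact Finset.sum_congr rfl fun u _ => hcs u u r r₂ r' r'₂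
    rw [hcs s s₂ r r₂ r' r'₂, hmain, hrhs, h2]
    ring
  · -- Choi condition ⇒ nonsignalling
    intro hch M hM ρ
    obtain ⟨hMlin, _hMpsd, hMtr⟩ := hM
    have hkey : ∀ (p q : S × R) (r' r'₂ : R'),
        trFst (E (Matrix.single p q 1)) r' r'₂ =
          (if p.1 = q.1 then dS⁻¹ else 0) *
            ∑ u : S, trFst (E (Matrix.single ((u, p.2) : S × R) (u, q.2) 1)) r' r'₂ := by
      rintro ⟨s, r⟩ ⟨s₂, r₂⟩ r' r'₂
      have h := hch s s₂ r r₂ r' r'₂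
      rw [hcs s s₂ r r₂ r' r'₂] at h
      have h2 : (∑ u : S, ∑ s' : S', choiState E ((u, r), (s', r')) ((u, r₂), (s', r'₂))) =
          c * ∑ u : S, trFst (E (Matrix.single ((u, r) : S × R) (u, r₂) 1)) r' r'₂ := by
        rw [Finset.mul_sum]
        exact Finset.sum_congr rfl fun u _ => hcs u u r r₂ r' r'₂
      rw [h2] at h
      have hcne : c ≠ 0 := by
        have hS : Nonempty S := ⟨s⟩
        have hR : Nonempty R := ⟨r⟩
        simp [hc, Fintype.card_ne_zero]
      have h' : c * trFst (E (Matrix.single (s, r) (s₂, r₂) 1)) r' r'₂ =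
          c * ((if s = s₂ then dS⁻¹ else 0) *
            ∑ u : S, trFst (E (Matrix.single ((u, r) : S × R) (u, r₂) 1)) r' r'₂) := by
        rw [h]; ring
      exact mul_left_cancel₀ hcne h'
    have htrM : ∀ a a' : S, (∑ u : S, M (Matrix.single a a' 1) u u) =
        if a = a' then 1 else 0 := by
      intro a a'
      have := hMtr (Matrix.single a a' 1)
      rw [NS.trace_std] at this
      simpa [Matrix.trace, Matrix.diag] using this
    ext r' r'₂
    rw [NS.expand_entry E hlin ρ r' r'₂, NS.expand_entry E hlin (lext M ρ) r' r'₂]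
    -- both sides equal the common expression T
    set H : R → R → ℂ := fun y y₂ =>
      ∑ u : S, trFst (E (Matrix.single ((u, y) : S × R) (u, y₂) 1)) r' r'₂ with hH
    have hL : (∑ p : S × R, ∑ q : S × R,
          ρ p q * trFst (E (Matrix.single p q 1)) r' r'₂) =
        ∑ y : R, ∑ y₂ : R, (∑ a : S, ρ (a, y) (a, y₂)) * (dS⁻¹ * H y y₂) := by
      rw [Finset.sum_congr rfl fun p _ => Finset.sum_congr rfl fun q (_ : q ∈ Finset.univ) =>
        by rw [hkey p q r' r'₂]]
      rw [Fintype.sum_prod_type]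
      rw [Finset.sum_congr rfl fun x (_ : x ∈ Finset.univ) =>
        Finset.sum_congr rfl fun y (_ : y ∈ Finset.univ) => by
          rw [Fintype.sum_prod_type, Finset.sum_comm]]
      -- now: ∑ x, ∑ y, ∑ y₂, ∑ x₂, ρ (x,y) (x₂,y₂) * (ite (x = x₂) dS⁻¹ 0 * H y y₂)
      simp only [mul_ite, ite_mul, mul_zero, zero_mul, Finset.sum_ite_eq,
        Finset.mem_univ, if_true]
      rw [Finset.sum_comm]
      refine Finset.sum_congr rfl fun y _ => ?_
      rw [Finset.sum_comm]
      refine Finset.sum_congr rfl fun y₂ _ => ?_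
      rw [Finset.sum_mul]
    have hR : (∑ p : S × R, ∑ q : S × R,
          (lext M ρ) p q * trFst (E (Matrix.single p q 1)) r' r'₂) =
        ∑ y : R, ∑ y₂ : R, (∑ a : S, ρ (a, y) (a, y₂)) * (dS⁻¹ * H y y₂) := by
      rw [Finset.sum_congr rfl fun p _ => Finset.sum_congr rfl fun q (_ : q ∈ Finset.univ) =>
        by rw [hkey p q r' r'₂]]
      rw [Fintype.sum_prod_type]
      rw [Finset.sum_congr rfl fun x (_ : x ∈ Finset.univ) =>
        Finset.sum_congr rfl fun y (_ : y ∈ Finset.univ) => by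
          rw [Fintype.sum_prod_type, Finset.sum_comm]]
      simp only [mul_ite, ite_mul, mul_zero, zero_mul, Finset.sum_ite_eq,
        Finset.mem_univ, if_true]
      rw [Finset.sum_comm]
      refine Finset.sum_congr rfl fun y _ => ?_
      rw [Finset.sum_comm]
      refine Finset.sum_congr rfl fun y₂ _ => ?_
      -- goal: ∑ x, (lext M ρ) (x,y) (x,y₂) * (dS⁻¹ * H y y₂) = (∑ a, ρ (a,y) (a,y₂)) * (dS⁻¹ * H y y₂)
      rw [← Finset.sum_mul]
      congr 1
      simp only [lext, Matrix.of_apply]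
      rw [Finset.sum_comm]
      refine Finset.sum_congr rfl fun a _ => ?_
      rw [Finset.sum_comm]
      calc (∑ a' : S, ∑ x : S, M (Matrix.single a a' 1) x x * ρ (a, y) (a', y₂))
          = ∑ a' : S, (if a = a' then 1 else 0) * ρ (a, y) (a', y₂) := by
            refine Finset.sum_congr rfl fun a' _ => ?_
            rw [← htrM a a', Finset.sum_mul]
        _ = ρ (a, y) (a, y₂) := by
            simp [ite_mul, zero_mul, Finset.sum_ite_eq]
    rw [hL, hR]
end

section
/- Define Kraus operators K⁽⁰⁾ = |00⟩⟨0,0| and, for each N ≥ 1, odd k ≤ N and even l ≤ N, K⁽ᴺ⁾ₖ,ₗ = (√2/√(2^N)) ( √C(N,l) |01⟩⟨N−k, k| + √C(N,k) |10⟩⟨N−l, l| ), mapping the two-mode Fock space to a two-qubit space. Then Σ K*K over all these Kraus operators equals the identity on the Fock space, i.e., the associated map Λ(ρ) = K⁽⁰⁾ρK⁽⁰⁾* + Σ_{N,k,l} K⁽ᴺ⁾ₖ,ₗ ρ (K⁽ᴺ⁾ₖ,ₗ)* is trace-preserving. -/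
open scoped BigOperators

/-- The Kraus operator `K⁽⁰⁾ = |00⟩⟨0,0|`, as a (possibly infinite) matrix with rows
indexed by the two-qubit basis and columns by the two-mode Fock basis. -/
noncomputable def K0 : (Fin 2 × Fin 2) → (ℕ × ℕ) → ℂ :=
  fun q f => if q = (0, 0) ∧ f = (0, 0) then 1 else 0

/-- The Kraus operator
`K⁽ᴺ⁾ₖ,ₗ = (√2/√(2^N)) ( √C(N,l) |01⟩⟨N−k, k| + √C(N,k) |10⟩⟨N−l, l| )`. -/
noncomputable def KNkl (N k l : ℕ) : (Fin 2 × Fin 2) → (ℕ × ℕ) → ℂ :=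
  fun q f =>
    ((Real.sqrt 2 : ℂ) / (Real.sqrt (2 ^ N) : ℂ)) *
      ((if q = (0, 1) ∧ f = (N - k, k) then (Real.sqrt (N.choose l) : ℂ) else 0) +
       (if q = (1, 0) ∧ f = (N - l, l) then (Real.sqrt (N.choose k) : ℂ) else 0))

/-- The index set of the Kraus operators `K⁽ᴺ⁾ₖ,ₗ`: `N ≥ 1`, `k` odd, `l` even,
`0 ≤ k, l ≤ N`. -/
def KrausIdx : Type :=
  {t : ℕ × ℕ × ℕ // 1 ≤ t.1 ∧ Odd t.2.1 ∧ t.2.1 ≤ t.1 ∧ Even t.2.2 ∧ t.2.2 ≤ t.1}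

/-- The `(f, f')` entry of `K* K` for a Kraus operator `K`. -/
noncomputable def gramEntry (K : (Fin 2 × Fin 2) → (ℕ × ℕ) → ℂ) (f f' : ℕ × ℕ) : ℂ :=
  ∑ q : Fin 2 × Fin 2, (starRingEnd ℂ) (K q f) * K q f'

/-- The predicate cutting out `KrausIdx` inside `ℕ × ℕ × ℕ`. -/
def KrausP (t : ℕ × ℕ × ℕ) : Prop :=
  1 ≤ t.1 ∧ Odd t.2.1 ∧ t.2.1 ≤ t.1 ∧ Even t.2.2 ∧ t.2.2 ≤ t.1

instance : DecidablePred KrausP := fun t => by unfold KrausP; infer_instance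

lemma gram_K0 (f f' : ℕ × ℕ) :
    gramEntry K0 f f' = if f = (0, 0) ∧ f' = (0, 0) then 1 else 0 := by
  simp only [gramEntry, K0, Fintype.sum_prod_type, Fin.sum_univ_two, Prod.mk.injEq]
  norm_num
  split_ifs <;> simp_all

lemma gram_KNkl (N k l : ℕ) (f f' : ℕ × ℕ) :
    gramEntry (KNkl N k l) f f' =
      (2 / 2 ^ N : ℂ) *
        ((if f = (N - k, k) ∧ f' = (N - k, k) then (N.choose l : ℂ) else 0) +
         (if f = (N - l, l) ∧ f' = (N - l, l) then (N.choose k : ℂ) else 0)) := by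
  have hmain : ∀ m : ℕ,
      (starRingEnd ℂ) ((Real.sqrt 2 : ℂ) / (Real.sqrt (2 ^ N) : ℂ) * (Real.sqrt m : ℂ)) *
        ((Real.sqrt 2 : ℂ) / (Real.sqrt (2 ^ N) : ℂ) * (Real.sqrt m : ℂ)) =
      2 / 2 ^ N * m := by
    intro m
    simp only [map_mul, map_div₀, Complex.conj_ofReal]
    rw [mul_mul_mul_comm, div_mul_div_comm, ← Complex.ofReal_mul, ← Complex.ofReal_mul,
      ← Complex.ofReal_mul, Real.mul_self_sqrt (by norm_num : (0:ℝ) ≤ 2),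
      Real.mul_self_sqrt (by positivity : (0:ℝ) ≤ 2 ^ N),
      Real.mul_self_sqrt (Nat.cast_nonneg m)]
    push_cast
    ring
  simp only [gramEntry, KNkl, Fintype.sum_prod_type, Fin.sum_univ_two, Prod.mk.injEq]
  norm_num
  split_ifs <;> simp_all <;> ring

lemma even_choose_sum (N : ℕ) (hN : 1 ≤ N) :
    (∑ i ∈ Finset.range (N + 1), if Even i then (N.choose i : ℂ) else 0) = 2 ^ N / 2 := by
  have hsum : (∑ i ∈ Finset.range (N + 1), (N.choose i : ℂ)) = 2 ^ N := by
    exact_mod_cast congrArg (Nat.cast : ℕ → ℂ) (Nat.sum_range_choose N)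
  have halt : (∑ i ∈ Finset.range (N + 1), (-1 : ℂ) ^ i * (N.choose i : ℂ)) = 0 := by
    have := Int.alternating_sum_range_choose (n := N)
    rw [if_neg (by omega)] at this
    exact_mod_cast congrArg (Int.cast : ℤ → ℂ) this
  have key : ∀ i, (if Even i then (N.choose i : ℂ) else 0) =
      ((N.choose i : ℂ) + (-1 : ℂ) ^ i * (N.choose i : ℂ)) / 2 := by
    intro i
    rcases Nat.even_or_odd i with h | h
    · rw [if_pos h, h.neg_one_pow]; ring
    · rw [if_neg (Nat.not_even_iff_odd.mpr h), h.neg_one_pow]; ring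
  simp_rw [key]
  rw [← Finset.sum_div, Finset.sum_add_distrib, hsum, halt, add_zero]

lemma odd_choose_sum (N : ℕ) (hN : 1 ≤ N) :
    (∑ i ∈ Finset.range (N + 1), if Odd i then (N.choose i : ℂ) else 0) = 2 ^ N / 2 := by
  have hsum : (∑ i ∈ Finset.range (N + 1), (N.choose i : ℂ)) = 2 ^ N := by
    exact_mod_cast congrArg (Nat.cast : ℕ → ℂ) (Nat.sum_range_choose N)
  have halt : (∑ i ∈ Finset.range (N + 1), (-1 : ℂ) ^ i * (N.choose i : ℂ)) = 0 := by
    have := Int.alternating_sum_range_choose (n := N)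
    rw [if_neg (by omega)] at this
    exact_mod_cast congrArg (Int.cast : ℤ → ℂ) this
  have key : ∀ i, (if Odd i then (N.choose i : ℂ) else 0) =
      ((N.choose i : ℂ) - (-1 : ℂ) ^ i * (N.choose i : ℂ)) / 2 := by
    intro i
    rcases Nat.even_or_odd i with h | h
    · rw [if_neg (Nat.not_odd_iff_even.mpr h), h.neg_one_pow]; ring
    · rw [if_pos h, h.neg_one_pow]; ring
  simp_rw [key]
  rw [← Finset.sum_div, Finset.sum_sub_distrib, hsum, halt, sub_zero]

/-- The Kraus operators `K⁽⁰⁾` and `K⁽ᴺ⁾ₖ,ₗ` (over all `N ≥ 1`,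
odd `k ≤ N`, even `l ≤ N`) satisfy `Σ K*K = 𝟙` on the two-mode Fock space, i.e. the
associated squashing map is trace-preserving. -/
theorem squashing_map_trace_preserving (f f' : ℕ × ℕ) :
    gramEntry K0 f f' +
      (∑' t : KrausIdx, gramEntry (KNkl t.1.1 t.1.2.1 t.1.2.2) f f') =
    if f = f' then 1 else 0 := by
  classical
  by_cases hff : f = f'
  · subst hff
    rw [if_pos rfl]
    obtain ⟨m, n⟩ := f
    by_cases h0 : (m, n) = ((0 : ℕ), (0 : ℕ))
    · -- vacuum case: all KNkl terms vanish, K0 contributes 1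
      have hz : ∀ t : KrausIdx,
          gramEntry (KNkl t.1.1 t.1.2.1 t.1.2.2) (m, n) (m, n) = 0 := by
        rintro ⟨⟨N, k, l⟩, hN, hk, hkN, hl, hlN⟩
        show gramEntry (KNkl N k l) (m, n) (m, n) = 0
        rw [gram_KNkl, if_neg, if_neg]
        · simp
        · rintro ⟨h1, -⟩
          rw [h0, Prod.mk.injEq] at h1
          omega
        · rintro ⟨h1, -⟩
          rw [h0, Prod.mk.injEq] at h1
          rcases hk with ⟨j, hj⟩
          omega
      rw [tsum_congr hz, tsum_zero, gram_K0, if_pos ⟨h0, h0⟩, add_zero]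
    · rw [gram_K0, if_neg (fun h => h0 h.1), zero_add]
      have hN0 : 1 ≤ m + n := by
        rcases Nat.eq_zero_or_pos (m + n) with h | h
        · exact absurd (by omega : m = 0 ∧ n = 0) (fun ⟨a, b⟩ => h0 (by simp [a, b]))
        · exact h
      rcases Nat.even_or_odd n with hn | hn
      · -- n even : support is N = m+n, l = n, k odd ≤ m+n
        set s : Finset KrausIdx :=
          Finset.subtype KrausP
            ({m + n} ×ˢ Finset.range (m + n + 1) ×ˢ {n}) with hs
        rw [tsum_eq_sum (s := s) ?_]
        · have hcoe : (∑ t ∈ s, gramEntry (KNkl t.1.1 t.1.2.1 t.1.2.2) (m, n) (m, n))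
              = ∑ v ∈ ({m + n} ×ˢ Finset.range (m + n + 1) ×ˢ {n}).filter KrausP,
                  gramEntry (KNkl v.1 v.2.1 v.2.2) (m, n) (m, n) := by
            rw [hs]
            exact Finset.sum_subtype_eq_sum_filter
              (fun v : ℕ × ℕ × ℕ => gramEntry (KNkl v.1 v.2.1 v.2.2) (m, n) (m, n))
          rw [hcoe, Finset.sum_filter]
          simp only [Finset.sum_product, Finset.sum_singleton]
          have hterm : ∀ x ∈ Finset.range (m + n + 1),
              (if KrausP (m + n, x, n) then
                gramEntry (KNkl (m + n) x n) (m, n) (m, n) else 0)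
              = (2 / 2 ^ (m + n) : ℂ) *
                  (if Odd x then ((m + n).choose x : ℂ) else 0) := by
            intro x hx
            rw [Finset.mem_range] at hx
            by_cases hox : Odd x
            · have hA : ¬((m, n) = (m + n - x, x) ∧ (m, n) = (m + n - x, x)) := by
                rintro ⟨h1, -⟩
                rw [Prod.mk.injEq] at h1
                rcases hox with ⟨j, hj⟩
                rcases hn with ⟨i, hi⟩
                omega
              have hB : (m, n) = (m + n - n, n) := by
                rw [Nat.add_sub_cancel]
              have hP : KrausP (m + n, x, n) := by
                show 1 ≤ m + n ∧ Odd x ∧ x ≤ m + n ∧ Even n ∧ n ≤ m + n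
                exact ⟨hN0, hox, by omega, hn, by omega⟩
              rw [if_pos hP, if_pos hox, gram_KNkl, if_neg hA,
                  if_pos ⟨hB, hB⟩, zero_add]
            · have hnP : ¬ KrausP (m + n, x, n) := by
                intro hP
                have hP' : 1 ≤ m + n ∧ Odd x ∧ x ≤ m + n ∧ Even n ∧ n ≤ m + n := hP
                exact hox hP'.2.1
              rw [if_neg hnP, if_neg hox, mul_zero]
          rw [Finset.sum_congr rfl hterm, ← Finset.mul_sum,
            odd_choose_sum _ hN0]
          have h2 : (2 : ℂ) ^ (m + n) ≠ 0 := pow_ne_zero _ two_ne_zero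
          field_simp
        · rintro ⟨⟨N, k, l⟩, hN, hk, hkN, hl, hlN⟩ ht
          have hN' : 1 ≤ N := hN
          have hk' : Odd k := hk
          have hkN' : k ≤ N := hkN
          have hl' : Even l := hl
          have hlN' : l ≤ N := hlN
          show gramEntry (KNkl N k l) (m, n) (m, n) = 0
          rw [gram_KNkl, if_neg, if_neg]
          · simp
          · rintro ⟨h1, -⟩
            rw [Prod.mk.injEq] at h1
            apply ht
            rw [hs]
            refine (Finset.mem_subtype (p := KrausP)).mpr ?_
            have hmem : ((⟨(N, k, l), hN, hk, hkN, hl, hlN⟩ : KrausIdx) :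
                ℕ × ℕ × ℕ) = (N, k, l) := rfl
            rw [hmem, Finset.mem_product, Finset.mem_product, Finset.mem_singleton,
              Finset.mem_singleton, Finset.mem_range]
            show N = m + n ∧ k < m + n + 1 ∧ l = n
            refine ⟨by omega, by omega, by omega⟩
          · rintro ⟨h1, -⟩
            rw [Prod.mk.injEq] at h1
            rcases hk' with ⟨j, hj⟩
            rcases hn with ⟨i, hi⟩
            omega
      · -- n odd : support is N = m+n, k = n, l even ≤ m+n
        set s : Finset KrausIdx :=
          Finset.subtype KrausP
            ({m + n} ×ˢ ({n} ×ˢ Finset.range (m + n + 1))) with hs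
        rw [tsum_eq_sum (s := s) ?_]
        · have hcoe : (∑ t ∈ s, gramEntry (KNkl t.1.1 t.1.2.1 t.1.2.2) (m, n) (m, n))
              = ∑ v ∈ ({m + n} ×ˢ ({n} ×ˢ Finset.range (m + n + 1))).filter KrausP,
                  gramEntry (KNkl v.1 v.2.1 v.2.2) (m, n) (m, n) := by
            rw [hs]
            exact Finset.sum_subtype_eq_sum_filter
              (fun v : ℕ × ℕ × ℕ => gramEntry (KNkl v.1 v.2.1 v.2.2) (m, n) (m, n))
          rw [hcoe, Finset.sum_filter]
          simp only [Finset.sum_product, Finset.sum_singleton]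
          have hterm : ∀ x ∈ Finset.range (m + n + 1),
              (if KrausP (m + n, n, x) then
                gramEntry (KNkl (m + n) n x) (m, n) (m, n) else 0)
              = (2 / 2 ^ (m + n) : ℂ) *
                  (if Even x then ((m + n).choose x : ℂ) else 0) := by
            intro x hx
            rw [Finset.mem_range] at hx
            by_cases hox : Even x
            · have hA : ¬((m, n) = (m + n - x, x) ∧ (m, n) = (m + n - x, x)) := by
                rintro ⟨h1, -⟩
                rw [Prod.mk.injEq] at h1
                rcases hox with ⟨j, hj⟩
                rcases hn with ⟨i, hi⟩
                omega
              have hB : (m, n) = (m + n - n, n) := by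
                rw [Nat.add_sub_cancel]
              have hP : KrausP (m + n, n, x) := by
                show 1 ≤ m + n ∧ Odd n ∧ n ≤ m + n ∧ Even x ∧ x ≤ m + n
                exact ⟨hN0, hn, by omega, hox, by omega⟩
              rw [if_pos hP, if_pos hox, gram_KNkl,
                  if_pos ⟨hB, hB⟩, if_neg hA, add_zero]
            · have hnP : ¬ KrausP (m + n, n, x) := by
                intro hP
                have hP' : 1 ≤ m + n ∧ Odd n ∧ n ≤ m + n ∧ Even x ∧ x ≤ m + n := hP
                exact hox hP'.2.2.2.1
              rw [if_neg hnP, if_neg hox, mul_zero]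
          rw [Finset.sum_congr rfl hterm, ← Finset.mul_sum,
            even_choose_sum _ hN0]
          have h2 : (2 : ℂ) ^ (m + n) ≠ 0 := pow_ne_zero _ two_ne_zero
          field_simp
        · rintro ⟨⟨N, k, l⟩, hN, hk, hkN, hl, hlN⟩ ht
          have hN' : 1 ≤ N := hN
          have hk' : Odd k := hk
          have hkN' : k ≤ N := hkN
          have hl' : Even l := hl
          have hlN' : l ≤ N := hlN
          show gramEntry (KNkl N k l) (m, n) (m, n) = 0
          rw [gram_KNkl, if_neg, if_neg]
          · simp
          · rintro ⟨h1, -⟩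
            rw [Prod.mk.injEq] at h1
            rcases hl' with ⟨j, hj⟩
            rcases hn with ⟨i, hi⟩
            omega
          · rintro ⟨h1, -⟩
            rw [Prod.mk.injEq] at h1
            apply ht
            rw [hs]
            refine (Finset.mem_subtype (p := KrausP)).mpr ?_
            have hmem : ((⟨(N, k, l), hN, hk, hkN, hl, hlN⟩ : KrausIdx) :
                ℕ × ℕ × ℕ) = (N, k, l) := rfl
            rw [hmem, Finset.mem_product, Finset.mem_product, Finset.mem_singleton,
              Finset.mem_singleton, Finset.mem_range]
            show N = m + n ∧ k = n ∧ l < m + n + 1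
            refine ⟨by omega, by omega, by omega⟩
  · -- off-diagonal: everything vanishes
    rw [if_neg hff]
    have hz : ∀ t : KrausIdx, gramEntry (KNkl t.1.1 t.1.2.1 t.1.2.2) f f' = 0 := by
      rintro ⟨⟨N, k, l⟩, -⟩
      rw [gram_KNkl, if_neg (fun h => hff (h.1.trans h.2.symm)),
        if_neg (fun h => hff (h.1.trans h.2.symm))]
      simp
    rw [tsum_congr hz, tsum_zero, gram_K0, if_neg (fun h => hff (h.1.trans h.2.symm)),
      add_zero]
end

section
/- If a QKD protocol is ε_cor-correct (Pr[K_A ≠ K_B and accept] ≤ ε_cor) and ε_sec-secret (½‖(ρ_∧Ω)_{K_A E} − τ_{K_A} ⊗ (ρ_∧Ω)_E‖₁ ≤ ε_sec), then it is (ε_cor + ε_sec)-sound: ½‖(ρ_∧Ω)_{K_A K_B E} − τ_{K_A K_B} ⊗ (ρ_∧Ω)_E‖₁ ≤ ε_cor + ε_sec, where τ_{K_A K_B} = 2^{−l} Σ_k |kk⟩⟨kk| is the ideal pair of identical uniform keys. -/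
open Matrix ComplexOrder
open scoped BigOperators

/-- The trace norm `‖M‖₁ = tr √(MᴴM)` of a complex matrix. -/
noncomputable def traceNorm {n : Type*} [Fintype n] [DecidableEq n]
    (M : Matrix n n ℂ) : ℝ :=
  ((Matrix.posSemidef_conjTranspose_mul_self M).1.eigenvectorUnitary.1 *
    diagonal (fun i => ((Real.sqrt ((Matrix.posSemidef_conjTranspose_mul_self M).1.eigenvalues i) : ℝ) : ℂ)) *
    (star (Matrix.posSemidef_conjTranspose_mul_self M).1.eigenvectorUnitary : Matrix n n ℂ)).trace.re

/-- The subnormalised classical-quantum state `ρ_{K_A K_B E}` built from the blocks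
`σ k k'` (the state conditioned on the protocol accepting). -/
noncomputable def cqState {K E : Type*} [Fintype K] [DecidableEq K]
    (σ : K → K → Matrix E E ℂ) : Matrix ((K × K) × E) ((K × K) × E) ℂ :=
  Matrix.of fun p q => if p.1 = q.1 then σ p.1.1 p.1.2 p.2 q.2 else 0

/-- The ideal state `τ_{K_A K_B} ⊗ ρ_E`: a pair of identical uniform keys in tensor
product with the reduced state on `E`. -/
noncomputable def idealPairState {K E : Type*} [Fintype K] [DecidableEq K] [Fintype E]
    (σ : K → K → Matrix E E ℂ) : Matrix ((K × K) × E) ((K × K) × E) ℂ :=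
  Matrix.of fun p q =>
    if p.1 = q.1 ∧ p.1.1 = p.1.2 then
      ((Fintype.card K : ℂ))⁻¹ * ∑ a : K, ∑ b : K, σ a b p.2 q.2
    else 0

/-- The marginal `ρ_{K_A E}` of the subnormalised state. -/
noncomputable def cqStateA {K E : Type*} [Fintype K] [DecidableEq K]
    (σ : K → K → Matrix E E ℂ) : Matrix (K × E) (K × E) ℂ :=
  Matrix.of fun p q => if p.1 = q.1 then ∑ k' : K, σ p.1 k' p.2 q.2 else 0

/-- The ideal state `τ_{K_A} ⊗ ρ_E`. -/
noncomputable def idealAState {K E : Type*} [Fintype K] [DecidableEq K] [Fintype E]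
    (σ : K → K → Matrix E E ℂ) : Matrix (K × E) (K × E) ℂ :=
  Matrix.of fun p q =>
    if p.1 = q.1 then ((Fintype.card K : ℂ))⁻¹ * ∑ a : K, ∑ b : K, σ a b p.2 q.2
    else 0

/-! ### Auxiliary trace-norm theory -/

set_option linter.unusedSectionVars false

open scoped MatrixOrder

section H
variable {n : Type*} [Fintype n] [DecidableEq n] {A : Matrix n n ℂ}

lemma traceNorm_eq_of_sq {M B : Matrix n n ℂ} (hB : B.PosSemidef)
    (h : B ^ 2 = Mᴴ * M) : traceNorm M = B.trace.re := by
  have hP := Matrix.posSemidef_conjTranspose_mul_self M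
  have hS : cfc Real.sqrt (Mᴴ * M) = (hP.1.eigenvectorUnitary.1 *
      diagonal (fun i => ((Real.sqrt (hP.1.eigenvalues i) : ℝ) : ℂ)) *
      (star hP.1.eigenvectorUnitary : Matrix n n ℂ)) := by
    rw [hP.1.cfc_eq, IsHermitian.cfc, Unitary.conjStarAlgAut_apply]; rfl
  have key : traceNorm M = (cfc Real.sqrt (Mᴴ * M)).trace.re := by rw [hS]; rfl
  have hSnn : 0 ≤ cfc Real.sqrt (Mᴴ * M) := cfc_nonneg (fun x _ => Real.sqrt_nonneg x)
  have hSS : cfc Real.sqrt (Mᴴ * M) * cfc Real.sqrt (Mᴴ * M) = Mᴴ * M := by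
    rw [← cfc_mul Real.sqrt Real.sqrt (Mᴴ * M)]
    conv_rhs => rw [← cfc_id' ℝ (Mᴴ * M)]
    exact cfc_congr fun x hx => Real.mul_self_sqrt (spectrum_nonneg_of_nonneg hP.nonneg hx)
  have e1 := CFC.sqrt_unique hSS hSnn
  have e2 := CFC.sqrt_unique (a := Mᴴ * M) (b := B) (by rw [← pow_two]; exact h) hB.nonneg
  rw [key, ← e1, e2]

lemma traceNorm_posSemidef (hA : A.PosSemidef) : traceNorm A = A.trace.re :=
  traceNorm_eq_of_sq hA (by rw [pow_two, hA.isHermitian.eq])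

lemma traceNorm_neg (M : Matrix n n ℂ) : traceNorm (-M) = traceNorm M := by
  have h := Matrix.posSemidef_conjTranspose_mul_self M
  have e1 : traceNorm M = (CFC.sqrt (Mᴴ * M)).trace.re :=
    traceNorm_eq_of_sq (CFC.sqrt_nonneg _).posSemidef (CFC.sq_sqrt _ h.nonneg)
  have e2 : traceNorm (-M) = (CFC.sqrt (Mᴴ * M)).trace.re :=
    traceNorm_eq_of_sq (M := -M) (CFC.sqrt_nonneg _).posSemidef
      (by rw [CFC.sq_sqrt _ h.nonneg, Matrix.conjTranspose_neg, neg_mul_neg])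
  rw [e1, e2]

lemma conj_mul_conj (U : Matrix n n ℂ) (hU : star U * U = 1) (B C : Matrix n n ℂ) :
    (U * B * star U) * (U * C * star U) = U * (B * C) * star U := by
  have h1 : ∀ X : Matrix n n ℂ, star U * (U * X) = X := fun X => by
    rw [← mul_assoc, hU, one_mul]
  simp only [mul_assoc, h1]

lemma psd_conj (hA : A.IsHermitian) (f : ℝ → ℝ) (hf : ∀ i, 0 ≤ f (hA.eigenvalues i)) :
    ((hA.eigenvectorUnitary : Matrix n n ℂ) *
      diagonal (Complex.ofReal ∘ f ∘ hA.eigenvalues) *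
      star (hA.eigenvectorUnitary : Matrix n n ℂ)).PosSemidef := by
  rw [Matrix.star_eq_conjTranspose]
  exact (Matrix.PosSemidef.diagonal (fun i => by
    simpa using Complex.zero_le_real.mpr (hf i))).mul_mul_conjTranspose_same _

lemma traceNorm_isHermitian (hA : A.IsHermitian) :
    traceNorm A = ∑ i, |hA.eigenvalues i| := by
  set U : Matrix n n ℂ := (hA.eigenvectorUnitary : Matrix n n ℂ) with hUdef
  have hU : star U * U = 1 := Unitary.star_mul_self_of_mem hA.eigenvectorUnitary.2
  set B : Matrix n n ℂ :=
    U * diagonal (Complex.ofReal ∘ (fun x => |x|) ∘ hA.eigenvalues) * star U with hBdef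
  have hB : B.PosSemidef := psd_conj hA _ (fun i => abs_nonneg _)
  have hsq : B ^ 2 = Aᴴ * A := by
    rw [hA.eq, pow_two, hBdef, conj_mul_conj U hU]
    conv_rhs => rw [hA.spectral_theorem, Unitary.conjStarAlgAut_apply, conj_mul_conj U hU]
    rw [diagonal_mul_diagonal, diagonal_mul_diagonal]
    congr 2
    funext i
    simp [← Complex.ofReal_mul, abs_mul_abs_self]
  rw [traceNorm_eq_of_sq hB hsq, hBdef, Matrix.trace_mul_cycle, hU, one_mul,
    Matrix.trace_diagonal]
  rw [Complex.re_sum]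
  simp

lemma conj_entry (X U : Matrix n n ℂ) (i : n) :
    (star U * X * U) i i = star (fun j => U j i) ⬝ᵥ (X *ᵥ fun j => U j i) := by
  simp only [Matrix.mul_apply, Matrix.star_apply, Matrix.mulVec, dotProduct,
    Pi.star_apply, Finset.sum_mul, Finset.mul_sum]
  rw [Finset.sum_comm]
  exact Finset.sum_congr rfl fun j _ => Finset.sum_congr rfl fun k _ => by ring

lemma trace_mul_herm (hA : A.IsHermitian) (X : Matrix n n ℂ) :
    (X * A).trace = ∑ i, (star (hA.eigenvectorUnitary : Matrix n n ℂ) * X *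
      (hA.eigenvectorUnitary : Matrix n n ℂ)) i i * (hA.eigenvalues i : ℂ) := by
  set U : Matrix n n ℂ := (hA.eigenvectorUnitary : Matrix n n ℂ)
  set d' : n → ℂ := Complex.ofReal ∘ hA.eigenvalues
  have e1 : X * A = X * U * diagonal d' * star U := by
    conv_lhs => rw [hA.spectral_theorem, Unitary.conjStarAlgAut_apply]
    simp only [mul_assoc]; rfl
  rw [e1, Matrix.trace_mul_comm, ← mul_assoc, ← mul_assoc]
  simp [Matrix.trace, Matrix.diag, Matrix.mul_diagonal, d']

lemma re_trace_mul_le (hA : A.IsHermitian) (X : Matrix n n ℂ)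
    (hX : ∀ v : n → ℂ, ‖star v ⬝ᵥ (X *ᵥ v)‖ ≤ (star v ⬝ᵥ v).re) :
    ((X * A).trace).re ≤ traceNorm A := by
  rw [traceNorm_isHermitian hA, trace_mul_herm hA X, Complex.re_sum]
  apply Finset.sum_le_sum
  intro i _
  set U : Matrix n n ℂ := (hA.eigenvectorUnitary : Matrix n n ℂ) with hUdef
  have hU : star U * U = 1 := Unitary.star_mul_self_of_mem hA.eigenvectorUnitary.2
  set u : n → ℂ := fun j => U j i with hudef
  set z : ℂ := (star U * X * U) i i with hzdef
  have hM : z = star u ⬝ᵥ (X *ᵥ u) := conj_entry X U i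
  have hu : star u ⬝ᵥ u = 1 := by
    have h1 : (star U * U) i i = 1 := by rw [hU]; exact Matrix.one_apply_eq i
    rw [← h1]
    simp [Matrix.mul_apply, dotProduct, Matrix.star_apply, hudef]
  have habs : ‖z‖ ≤ 1 := by
    rw [hM]
    refine (hX u).trans ?_
    rw [hu]
    simp
  have h2 : |z.re| ≤ 1 := le_trans (Complex.abs_re_le_norm z) habs
  have : (z * ((hA.eigenvalues i : ℝ) : ℂ)).re = z.re * hA.eigenvalues i := by
    simp [Complex.mul_re]
  rw [this]
  calc z.re * hA.eigenvalues i ≤ |z.re * hA.eigenvalues i| := le_abs_self _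
    _ = |z.re| * |hA.eigenvalues i| := abs_mul _ _
    _ ≤ 1 * |hA.eigenvalues i| := by
        exact mul_le_mul_of_nonneg_right h2 (abs_nonneg _)
    _ = |hA.eigenvalues i| := one_mul _

lemma exists_dual (hC : A.IsHermitian) :
    ∃ X : Matrix n n ℂ,
      (∀ v : n → ℂ, ‖star v ⬝ᵥ (X *ᵥ v)‖ ≤ (star v ⬝ᵥ v).re) ∧
      ((X * A).trace).re = traceNorm A := by
  classical
  set U : Matrix n n ℂ := (hC.eigenvectorUnitary : Matrix n n ℂ) with hUdef
  have hU : star U * U = 1 := Unitary.star_mul_self_of_mem hC.eigenvectorUnitary.2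
  have hU' : U * star U = 1 := Unitary.mul_star_self_of_mem hC.eigenvectorUnitary.2
  set s : n → ℝ := fun i => if hC.eigenvalues i < 0 then -1 else 1 with hsdef
  have hs1 : ∀ i, |s i| = 1 := by
    intro i; rw [hsdef]; dsimp only; split_ifs <;> simp
  set X : Matrix n n ℂ := U * diagonal (Complex.ofReal ∘ s) * star U with hXdef
  refine ⟨X, ?_, ?_⟩
  · intro v
    set w : n → ℂ := star U *ᵥ v with hwdef
    have hsw : star v ᵥ* U = star w := by
      rw [hwdef, Matrix.star_mulVec, Matrix.star_eq_conjTranspose,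
        Matrix.conjTranspose_conjTranspose]
    have e1 : star v ⬝ᵥ (X *ᵥ v) = star w ⬝ᵥ (diagonal (Complex.ofReal ∘ s) *ᵥ w) := by
      rw [hXdef, ← Matrix.mulVec_mulVec, ← Matrix.mulVec_mulVec,
        dotProduct_mulVec, hsw]
    have e2 : (star v ⬝ᵥ v) = star w ⬝ᵥ w := by
      have : star w ⬝ᵥ w = star v ⬝ᵥ v := by
        rw [show star w = star v ᵥ* U from hsw.symm, ← dotProduct_mulVec,
          hwdef, Matrix.mulVec_mulVec, hU', Matrix.one_mulVec]
      exact this.symm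
    rw [e1, e2]
    have e3 : star w ⬝ᵥ (diagonal (Complex.ofReal ∘ s) *ᵥ w)
        = ∑ j, (s j : ℂ) * (star (w j) * w j) := by
      simp only [dotProduct, Matrix.mulVec_diagonal, Pi.star_apply, Function.comp_apply]
      exact Finset.sum_congr rfl fun j _ => by ring
    have e4 : (star w ⬝ᵥ w).re = ∑ j, Complex.normSq (w j) := by
      simp only [dotProduct, Pi.star_apply, Complex.re_sum]
      refine Finset.sum_congr rfl fun j _ => ?_
      rw [mul_comm, RCLike.star_def, Complex.mul_conj, Complex.ofReal_re]
    rw [e3, e4]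
    refine (norm_sum_le _ _).trans ?_
    refine Finset.sum_le_sum fun j _ => ?_
    rw [show (star (w j) * w j) = ((Complex.normSq (w j) : ℝ) : ℂ) from by
      rw [mul_comm, RCLike.star_def, Complex.mul_conj],
      ← Complex.ofReal_mul, Complex.norm_real, Real.norm_eq_abs, abs_mul, hs1 j, one_mul,
      abs_of_nonneg (Complex.normSq_nonneg _)]
  · rw [trace_mul_herm hC X, traceNorm_isHermitian hC, Complex.re_sum]
    have hD : star U * X * U = diagonal (Complex.ofReal ∘ s) := by
      rw [hXdef,
        show star U * (U * diagonal (Complex.ofReal ∘ s) * star U) * U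
          = (star U * U) * diagonal (Complex.ofReal ∘ s) * (star U * U) from by
            simp only [mul_assoc],
        hU, one_mul, mul_one]
    refine Finset.sum_congr rfl fun i _ => ?_
    rw [hD, Matrix.diagonal_apply_eq, Function.comp_apply, ← Complex.ofReal_mul,
      Complex.ofReal_re, hsdef]
    dsimp only
    split_ifs with h
    · rw [abs_of_neg h]; ring
    · rw [abs_of_nonneg (not_lt.mp h)]; ring

lemma traceNorm_add_le {B : Matrix n n ℂ} (hA : A.IsHermitian) (hB : B.IsHermitian) :
    traceNorm (A + B) ≤ traceNorm A + traceNorm B := by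
  obtain ⟨X, hX, hXC⟩ := exists_dual (hA.add hB)
  have : ((X * (A + B)).trace).re = ((X * A).trace).re + ((X * B).trace).re := by
    rw [mul_add, Matrix.trace_add, Complex.add_re]
  rw [← hXC, this]
  exact add_le_add (re_trace_mul_le hA X hX) (re_trace_mul_le hB X hX)

lemma posSemidef_sum {ι : Type*} (t : Finset ι) (f : ι → Matrix n n ℂ)
    (h : ∀ i ∈ t, (f i).PosSemidef) : (∑ i ∈ t, f i).PosSemidef :=
  Finset.sum_induction f _ (fun _ _ ha hb => ha.add hb) Matrix.PosSemidef.zero h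

end H

/-! ### Block-diagonal matrices -/

section Blk
variable {K E : Type*} [Fintype K] [DecidableEq K] [Fintype E] [DecidableEq E]

/-- The block-diagonal matrix with blocks `B k`. -/
noncomputable def blk (B : K → Matrix E E ℂ) : Matrix (K × E) (K × E) ℂ :=
  Matrix.of fun p q => if p.1 = q.1 then B p.1 p.2 q.2 else 0

lemma blk_mul (B C : K → Matrix E E ℂ) :
    blk B * blk C = blk (fun k => B k * C k) := by
  ext p q
  simp only [blk, Matrix.mul_apply, Matrix.of_apply, Fintype.sum_prod_type]
  rw [Finset.sum_eq_single p.1]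
  · by_cases h : p.1 = q.1 <;> simp [h]
  · intro k _ hk
    simp [Ne.symm hk]
  · simp

lemma blk_conjTranspose (B : K → Matrix E E ℂ) :
    (blk B)ᴴ = blk (fun k => (B k)ᴴ) := by
  ext p q
  show star ((blk B) q p) = _
  unfold blk
  simp only [Matrix.of_apply]
  by_cases h : p.1 = q.1
  · rw [if_pos h.symm, if_pos h, Matrix.conjTranspose_apply, h]
  · rw [if_neg (fun hh => h hh.symm), if_neg h, star_zero]

lemma blk_trace (B : K → Matrix E E ℂ) : (blk B).trace = ∑ k, (B k).trace := by
  simp [Matrix.trace, blk, Fintype.sum_prod_type, Matrix.diag]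

lemma blk_posSemidef {B : K → Matrix E E ℂ} (h : ∀ k, (B k).PosSemidef) :
    (blk B).PosSemidef := by
  refine Matrix.PosSemidef.of_dotProduct_mulVec_nonneg ?_ ?_
  · show (blk B)ᴴ = blk B
    rw [blk_conjTranspose]
    exact congrArg blk (funext fun k => (h k).1)
  · intro x
    have e : star x ⬝ᵥ (blk B *ᵥ x)
        = ∑ k, star (fun e => x (k, e)) ⬝ᵥ (B k *ᵥ fun e => x (k, e)) := by
      simp only [dotProduct, Matrix.mulVec, Pi.star_apply, blk, Matrix.of_apply,
        Fintype.sum_prod_type]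
      refine Finset.sum_congr rfl fun k _ => Finset.sum_congr rfl fun e _ => ?_
      congr 1
      rw [Finset.sum_eq_single k]
      · simp
      · intro b _ hb; simp [Ne.symm hb]
      · simp
    rw [e]
    exact Finset.sum_nonneg fun k _ => (h k).dotProduct_mulVec_nonneg _

lemma traceNorm_blk (B : K → Matrix E E ℂ) :
    traceNorm (blk B) = ∑ k, traceNorm (B k) := by
  have hpsd : ∀ k, ((B k)ᴴ * B k).PosSemidef :=
    fun k => Matrix.posSemidef_conjTranspose_mul_self _
  have h1 : (blk (fun k => CFC.sqrt ((B k)ᴴ * B k))).PosSemidef :=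
    blk_posSemidef fun k => (CFC.sqrt_nonneg _).posSemidef
  have h2 : (blk (fun k => CFC.sqrt ((B k)ᴴ * B k))) ^ 2 = (blk B)ᴴ * blk B := by
    rw [pow_two, blk_mul, blk_conjTranspose, blk_mul]
    exact congrArg blk (funext fun k => by
      rw [← pow_two, CFC.sq_sqrt _ (hpsd k).nonneg])
  rw [traceNorm_eq_of_sq h1 h2, blk_trace, Complex.re_sum]
  exact Finset.sum_congr rfl fun k _ =>
    (traceNorm_eq_of_sq (CFC.sqrt_nonneg _).posSemidef (CFC.sq_sqrt _ (hpsd k).nonneg)).symm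

end Blk

/-- If a QKD protocol is `ε_cor`-correct and `ε_sec`-secret, then it
is `(ε_cor + ε_sec)`-sound.  The accepted (subnormalised) output is modelled by PSD
blocks `σ k k'` for the key pair `(k, k')` of an `l`-bit key alphabet `K`. -/
theorem correct_and_secret_implies_sound
    {K E : Type*} [Fintype K] [DecidableEq K] [Fintype E] [DecidableEq E]
    (l : ℕ) (hK : Fintype.card K = 2 ^ l)
    (σ : K → K → Matrix E E ℂ) (hσ : ∀ k k', (σ k k').PosSemidef)
    (εcor εsec : ℝ)
    (hcor : (∑ k : K, ∑ k' : K, if k ≠ k' then (σ k k').trace.re else 0) ≤ εcor)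
    (hsec : (1 / 2 : ℝ) * traceNorm (cqStateA σ - idealAState σ) ≤ εsec) :
    (1 / 2 : ℝ) * traceNorm (cqState σ - idealPairState σ) ≤ εcor + εsec := by
  classical
  set c : ℂ := ((Fintype.card K : ℂ))⁻¹ with hc
  set Sm : Matrix E E ℂ := ∑ a : K, ∑ b : K, σ a b with hSmdef
  have hSmPSD : Sm.PosSemidef :=
    posSemidef_sum _ _ fun a _ => posSemidef_sum _ _ fun b _ => hσ a b
  have hcSm : (c • Sm).IsHermitian := by
    show (c • Sm)ᴴ = c • Sm
    rw [Matrix.conjTranspose_smul, hSmPSD.1]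
    congr 1
    simp [hc]
  -- the two difference matrices as block-diagonal matrices
  have hA_eq : cqStateA σ - idealAState σ = blk (fun k => (∑ j : K, σ k j) - c • Sm) := by
    ext p q
    obtain ⟨k, e⟩ := p
    obtain ⟨m, f⟩ := q
    by_cases h : k = m
    · subst h
      simp [cqStateA, idealAState, blk, hSmdef, Matrix.sum_apply, Matrix.smul_apply,
        Finset.mul_sum, hc]
    · simp [cqStateA, idealAState, blk, h]
  have hPair_eq : cqState σ - idealPairState σ
      = blk (fun kk : K × K => σ kk.1 kk.2 - if kk.1 = kk.2 then c • Sm else 0) := by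
    ext p q
    obtain ⟨⟨k1, k2⟩, e⟩ := p
    obtain ⟨⟨l1, l2⟩, f⟩ := q
    by_cases h : (k1, k2) = (l1, l2)
    · cases h
      by_cases h2 : k1 = k2 <;>
        simp [cqState, idealPairState, blk, h2, hSmdef, Matrix.sum_apply,
          Matrix.smul_apply, Finset.mul_sum, hc]
    · simp [cqState, idealPairState, blk, h]
  have hsum_herm : ∀ k : K, (∑ j : K, σ k j).IsHermitian :=
    fun k => (posSemidef_sum _ _ fun j _ => hσ k j).1
  have hNkPSD : ∀ k : K, (∑ j ∈ Finset.univ.erase k, σ k j).PosSemidef :=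
    fun k => posSemidef_sum _ _ fun j _ => hσ k j
  have hdecomp : ∀ k : K, σ k k - c • Sm
      = ((∑ j : K, σ k j) - c • Sm) + -(∑ j ∈ Finset.univ.erase k, σ k j) := by
    intro k
    have e : (∑ j : K, σ k j) = σ k k + ∑ j ∈ Finset.univ.erase k, σ k j :=
      (Finset.add_sum_erase _ _ (Finset.mem_univ k)).symm
    rw [e]; abel
  have hdiag : ∀ k : K, traceNorm (σ k k - c • Sm)
      ≤ traceNorm ((∑ j : K, σ k j) - c • Sm)
        + ∑ k' ∈ Finset.univ.erase k, (σ k k').trace.re := by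
    intro k
    rw [hdecomp k]
    refine (traceNorm_add_le ((hsum_herm k).sub hcSm) (hNkPSD k).1.neg).trans ?_
    rw [traceNorm_neg, traceNorm_posSemidef (hNkPSD k), Matrix.trace_sum, Complex.re_sum]
  have key : ∀ k : K,
      (∑ k' : K, traceNorm (σ k k' - if k = k' then c • Sm else 0))
      ≤ traceNorm ((∑ j : K, σ k j) - c • Sm)
        + 2 * ∑ k' ∈ Finset.univ.erase k, (σ k k').trace.re := by
    intro k
    rw [← Finset.add_sum_erase _ _ (Finset.mem_univ k), if_pos rfl]
    have e1 : ∑ k' ∈ Finset.univ.erase k,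
        traceNorm (σ k k' - if k = k' then c • Sm else 0)
        = ∑ k' ∈ Finset.univ.erase k, (σ k k').trace.re := by
      refine Finset.sum_congr rfl fun k' hk' => ?_
      have hne : ¬ k = k' := fun h => (Finset.mem_erase.mp hk').1 h.symm
      rw [if_neg hne, sub_zero, traceNorm_posSemidef (hσ k k')]
    rw [e1]
    have := hdiag k
    linarith
  have ecor : ∀ k : K, ∑ k' ∈ Finset.univ.erase k, (σ k k').trace.re
      = ∑ k' : K, if k ≠ k' then (σ k k').trace.re else 0 := by
    intro k
    rw [Finset.sum_ite, Finset.sum_const_zero, add_zero]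
    congr 1
    ext k'
    simp [Finset.mem_erase, ne_comm]
  -- main chain
  have main : traceNorm (cqState σ - idealPairState σ)
      ≤ traceNorm (cqStateA σ - idealAState σ)
        + 2 * ∑ k : K, ∑ k' : K, if k ≠ k' then (σ k k').trace.re else 0 := by
    rw [hPair_eq, traceNorm_blk, Fintype.sum_prod_type, hA_eq, traceNorm_blk]
    calc (∑ k : K, ∑ k' : K, traceNorm (σ k k' - if k = k' then c • Sm else 0))
        ≤ ∑ k : K, (traceNorm ((∑ j : K, σ k j) - c • Sm)
            + 2 * ∑ k' ∈ Finset.univ.erase k, (σ k k').trace.re) :=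
          Finset.sum_le_sum fun k _ => key k
      _ = (∑ k : K, traceNorm ((∑ j : K, σ k j) - c • Sm))
            + 2 * ∑ k : K, ∑ k' : K, if k ≠ k' then (σ k k').trace.re else 0 := by
          rw [Finset.sum_add_distrib, Finset.mul_sum]
          congr 1
          exact Finset.sum_congr rfl fun k _ => by rw [ecor k]
  linarith
end
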